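/- Let f : ℝ^d → ℝ be convex and differentiable and satisfy the block-Lipschitz assumption with resulting constant L. Then for all x, y ∈ ℝ^d: ‖∇f(y) − ∇f(x)‖² ≤ 2L (f(y) − f(x) − ⟨∇f(x), y − x⟩). -/

import Mathlib

noncomputable section
open MeasureTheory Finset Set RealInnerProductSpace
open Matrix

abbrev Euc (d : ℕ) := EuclideanSpace ℝ (Fin d)

def blockMask {d m : ℕ} (blk : Fin d → Fin m) (j : Fin m) (z : Euc d) : Euc d :=
  (EuclideanSpace.equiv (Fin d) ℝ).symm fun i => if blk i = j then z i else 0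

def blockCombine {d m : ℕ} (blk : Fin d → Fin m) (j : ℕ) (x y : Euc d) : Euc d :=
  (EuclideanSpace.equiv (Fin d) ℝ).symm fun i => if (blk i : ℕ) + 1 ≤ j then x i else y i

def quadForm {d : ℕ} (Q : Matrix (Fin d) (Fin d) ℝ) (z : Euc d) : ℝ :=
  ∑ i, ∑ i', Q i i' * z i * z i'

def keepGE {d m : ℕ} (blk : Fin d → Fin m) (j : ℕ) (Q : Matrix (Fin d) (Fin d) ℝ) :
    Matrix (Fin d) (Fin d) ℝ :=
  Matrix.of fun i i' => if j ≤ (blk i : ℕ) + 1 ∧ j ≤ (blk i' : ℕ) + 1 then Q i i' else 0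

def Qtilde {d m : ℕ} (blk : Fin d → Fin m) (Q : Fin m → Matrix (Fin d) (Fin d) ℝ) :
    Matrix (Fin d) (Fin d) ℝ :=
  ∑ j : Fin m, (keepGE blk ((j : ℕ) + 1) (Q j) + keepGE blk ((j : ℕ) + 2) (Q j))

def specNorm {d : ℕ} (Q : Matrix (Fin d) (Fin d) ℝ) : ℝ :=
  ‖Matrix.toEuclideanCLM (𝕜 := ℝ) Q‖

def bigL {d m : ℕ} (blk : Fin d → Fin m) (Q : Fin m → Matrix (Fin d) (Fin d) ℝ) : ℝ :=
  Real.sqrt (2 * specNorm (Qtilde blk Q))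

def BlockLip {d m : ℕ} (blk : Fin d → Fin m) (f : Euc d → ℝ)
    (Q : Fin m → Matrix (Fin d) (Fin d) ℝ) : Prop :=
  ∀ (j : Fin m) (x y : Euc d),
    ‖blockMask blk j (gradient f x) - blockMask blk j (gradient f y)‖ ^ 2 ≤
      quadForm (Q j) (x - y)

def SubgradStrongConvex {d : ℕ} (γ : ℝ) (g : Euc d → ℝ) : Prop :=
  ∀ x y s : Euc d, (∀ z, g x + ⟪s, z - x⟫ ≤ g z) →
    g x + ⟪s, y - x⟫ + γ / 2 * ‖y - x‖ ^ 2 ≤ g y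

def mge {d m : ℕ} (blk : Fin d → Fin m) (k : ℕ) (v : Euc d) : Euc d :=
  (EuclideanSpace.equiv (Fin d) ℝ).symm fun i => if k ≤ (blk i : ℕ) then v i else 0

-- nat-indexed block mask
def nmask {d m : ℕ} (blk : Fin d → Fin m) (j : ℕ) (v : Euc d) : Euc d :=
  (EuclideanSpace.equiv (Fin d) ℝ).symm fun i => if (blk i : ℕ) = j then v i else 0

-- Euclideanization of mulVec
def eucMulVec {d : ℕ} (A : Matrix (Fin d) (Fin d) ℝ) (z : Euc d) : Euc d :=
  (EuclideanSpace.equiv (Fin d) ℝ).symm (A.mulVec z)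

lemma quadForm_transpose_mul_self {d : ℕ} (A : Matrix (Fin d) (Fin d) ℝ) (z : Euc d) :
    quadForm (Aᵀ * A) z = ‖eucMulVec A z‖^2 := by
  rw [← real_inner_self_eq_norm_sq]
  simp only [quadForm, eucMulVec, PiLp.inner_apply, RCLike.inner_apply, conj_trivial,
    EuclideanSpace.equiv, PiLp.continuousLinearEquiv_symm_apply, WithLp.equiv_symm_apply, PiLp.toLp_apply,
    Matrix.mul_apply, Matrix.transpose_apply, Matrix.mulVec, dotProduct]
  have h1 : ∀ i i' : Fin d, (∑ k, A k i * A k i') * z i * z i'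
      = ∑ k, (A k i * z i) * (A k i' * z i') := by
    intro i i'
    rw [Finset.sum_mul, Finset.sum_mul]
    exact Finset.sum_congr rfl fun k _ => by ring
  simp only [h1]
  calc (∑ i, ∑ i', ∑ k, (A k i * z i) * (A k i' * z i'))
      = ∑ i, ∑ k, ∑ i', (A k i * z i) * (A k i' * z i') :=
        Finset.sum_congr rfl fun i _ => Finset.sum_comm
    _ = ∑ k, ∑ i, ∑ i', (A k i * z i) * (A k i' * z i') := Finset.sum_comm
    _ = ∑ k, (∑ i, A k i * z i) * (∑ i', A k i' * z i') :=
        Finset.sum_congr rfl fun k _ => (Finset.sum_mul_sum _ _ _ _).symm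

lemma keepGE_quadForm {d m : ℕ} (blk : Fin d → Fin m) (k : ℕ) (Q : Matrix (Fin d) (Fin d) ℝ)
    (v : Euc d) : quadForm (keepGE blk (k+1) Q) v = quadForm Q (mge blk k v) := by
  simp only [quadForm, keepGE, mge, EuclideanSpace.equiv, PiLp.continuousLinearEquiv_symm_apply,
    WithLp.equiv_symm_apply, PiLp.toLp_apply, Matrix.of_apply]
  refine Finset.sum_congr rfl fun i _ => Finset.sum_congr rfl fun i' _ => ?_
  by_cases h1 : k ≤ (blk i : ℕ) <;> by_cases h2 : k ≤ (blk i' : ℕ) <;>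
    simp [h1, h2, Nat.add_le_add_iff_right]

lemma euc_inner_eq {d : ℕ} (a b : Euc d) : ⟪a, b⟫ = ∑ i, a i * b i := by
  simp [PiLp.inner_apply, RCLike.inner_apply, mul_comm]

lemma euc_norm_sq {d : ℕ} (a : Euc d) : ‖a‖^2 = ∑ i, (a i)^2 := by
  rw [← real_inner_self_eq_norm_sq]
  simp only [PiLp.inner_apply, RCLike.inner_apply, conj_trivial, sq]

lemma toEuclideanCLM_apply' {d : ℕ} (Q : Matrix (Fin d) (Fin d) ℝ) (z : Euc d) (i : Fin d) :
    (Matrix.toEuclideanCLM (𝕜 := ℝ) Q) z i = ∑ i', Q i i' * z i' := by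
  have : z = (WithLp.equiv 2 (Fin d → ℝ)).symm (WithLp.equiv 2 (Fin d → ℝ) z) := rfl
  rw [Matrix.ofLp_toEuclideanCLM]
  simp [Matrix.mulVec, dotProduct]

lemma quadForm_le_specNorm {d : ℕ} (Q : Matrix (Fin d) (Fin d) ℝ) (z : Euc d) :
    quadForm Q z ≤ specNorm Q * ‖z‖^2 := by
  have h1 : quadForm Q z = ⟪z, (Matrix.toEuclideanCLM (𝕜 := ℝ) Q) z⟫ := by
    rw [euc_inner_eq]
    simp only [toEuclideanCLM_apply', quadForm, Finset.mul_sum]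
    exact Finset.sum_congr rfl fun i _ => Finset.sum_congr rfl fun i' _ => by ring
  rw [h1]
  calc ⟪z, (Matrix.toEuclideanCLM (𝕜 := ℝ) Q) z⟫ ≤ ‖z‖ * ‖(Matrix.toEuclideanCLM (𝕜 := ℝ) Q) z‖ :=
        real_inner_le_norm _ _
    _ ≤ ‖z‖ * (specNorm Q * ‖z‖) := by
        refine mul_le_mul_of_nonneg_left ?_ (norm_nonneg _)
        exact (Matrix.toEuclideanCLM (𝕜 := ℝ) Q).le_opNorm z
    _ = specNorm Q * ‖z‖^2 := by ring

lemma sum_nmask_normsq {d m : ℕ} (blk : Fin d → Fin m) (v : Euc d) :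
    ∑ j ∈ Finset.range m, ‖nmask blk j v‖^2 = ‖v‖^2 := by
  simp only [euc_norm_sq, nmask, EuclideanSpace.equiv, PiLp.continuousLinearEquiv_symm_apply,
    WithLp.equiv_symm_apply, PiLp.toLp_apply]
  rw [Finset.sum_comm]
  refine Finset.sum_congr rfl fun i _ => ?_
  rw [Finset.sum_congr rfl (fun j _ => by
    rw [show (if (blk i : ℕ) = j then v i else 0)^2 = if (blk i : ℕ) = j then (v i)^2 else 0
      from by split <;> simp])]
  rw [Finset.sum_ite_eq (Finset.range m) ((blk i : ℕ)) (fun _ => (v i)^2)]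
  simp [Fin.is_lt]

lemma nmask_eq_blockMask {d m : ℕ} (blk : Fin d → Fin m) (j : ℕ) (hj : j < m) (v : Euc d) :
    nmask blk j v = blockMask blk ⟨j, hj⟩ v := by
  ext i
  simp only [nmask, blockMask, EuclideanSpace.equiv, PiLp.continuousLinearEquiv_symm_apply,
    WithLp.equiv_symm_apply, PiLp.toLp_apply]
  congr 1
  simp [Fin.ext_iff]

lemma inner_nmask {d m : ℕ} (blk : Fin d → Fin m) (j : ℕ) (g v : Euc d) :
    ⟪g, nmask blk j v⟫ = ⟪nmask blk j g, nmask blk j v⟫ := by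
  simp only [euc_inner_eq, nmask, EuclideanSpace.equiv, PiLp.continuousLinearEquiv_symm_apply,
    WithLp.equiv_symm_apply, PiLp.toLp_apply]
  refine Finset.sum_congr rfl fun i _ => ?_
  split <;> simp

lemma nmask_sub {d m : ℕ} (blk : Fin d → Fin m) (j : ℕ) (x y : Euc d) :
    nmask blk j (x - y) = nmask blk j x - nmask blk j y := by
  ext i
  simp only [nmask, EuclideanSpace.equiv, PiLp.continuousLinearEquiv_symm_apply,
    WithLp.equiv_symm_apply, PiLp.toLp_apply, PiLp.sub_apply]
  split <;> simp

lemma sum_inner_nmask {d m : ℕ} (blk : Fin d → Fin m) (g v : Euc d) :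
    ∑ j ∈ Finset.range m, ⟪g, nmask blk j v⟫ = ⟪g, v⟫ := by
  simp only [euc_inner_eq, nmask, EuclideanSpace.equiv, PiLp.continuousLinearEquiv_symm_apply,
    WithLp.equiv_symm_apply, PiLp.toLp_apply]
  rw [Finset.sum_comm]
  refine Finset.sum_congr rfl fun i _ => ?_
  rw [Finset.sum_congr rfl (fun j _ => by
    rw [show g i * (if (blk i : ℕ) = j then v i else 0) =
      if (blk i : ℕ) = j then g i * v i else 0 from by split <;> simp])]
  rw [Finset.sum_ite_eq (Finset.range m) ((blk i : ℕ)) (fun _ => g i * v i)]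
  simp [Fin.is_lt]

lemma blockCombine_zero {d m : ℕ} (blk : Fin d → Fin m) (a b : Euc d) :
    blockCombine blk 0 a b = b := by
  ext i
  simp [blockCombine, EuclideanSpace.equiv]

lemma blockCombine_top {d m : ℕ} (blk : Fin d → Fin m) (a b : Euc d) :
    blockCombine blk m a b = a := by
  ext i
  simp only [blockCombine, EuclideanSpace.equiv, PiLp.continuousLinearEquiv_symm_apply,
    WithLp.equiv_symm_apply, PiLp.toLp_apply]
  rw [if_pos (Nat.succ_le_of_lt (Fin.is_lt _))]

lemma blockCombine_succ {d m : ℕ} (blk : Fin d → Fin m) (j : ℕ) (a b : Euc d) :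
    blockCombine blk j a b + nmask blk j (a - b) = blockCombine blk (j+1) a b := by
  ext i
  simp only [blockCombine, nmask, EuclideanSpace.equiv, PiLp.continuousLinearEquiv_symm_apply,
    WithLp.equiv_symm_apply, PiLp.toLp_apply, PiLp.add_apply, PiLp.sub_apply]
  rcases Nat.lt_trichotomy ((blk i : ℕ) + 1) (j+1) with h | h | h
  · rw [if_pos (Nat.lt_succ_iff.mp h), if_pos (le_of_lt h), if_neg (by omega)]
    ring
  · rw [if_neg (by omega), if_pos (le_of_eq h), if_pos (by omega)]
    ring
  · rw [if_neg (by omega), if_neg (by omega), if_neg (by omega)]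
    ring

lemma combine_step_eq {d m : ℕ} (blk : Fin d → Fin m) (j : ℕ) (a b : Euc d) (t : ℝ) :
    a - (blockCombine blk j a b + t • nmask blk j (a - b)) =
      (1-t) • mge blk j (a - b) + t • mge blk (j+1) (a - b) := by
  ext i
  simp only [blockCombine, nmask, mge, EuclideanSpace.equiv, PiLp.continuousLinearEquiv_symm_apply,
    WithLp.equiv_symm_apply, PiLp.toLp_apply, PiLp.add_apply, PiLp.sub_apply, PiLp.smul_apply, smul_eq_mul]
  rcases Nat.lt_trichotomy ((blk i : ℕ)) j with h | h | h
  · rw [if_pos (by omega), if_neg (by omega), if_neg (by omega), if_neg (by omega)]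
    ring
  · rw [if_neg (by omega), if_pos (by omega), if_pos (by omega), if_neg (by omega)]
    ring
  · rw [if_neg (by omega), if_neg (by omega), if_pos (by omega), if_pos (by omega)]
    ring

lemma quadForm_add {d : ℕ} (P R : Matrix (Fin d) (Fin d) ℝ) (z : Euc d) :
    quadForm (P + R) z = quadForm P z + quadForm R z := by
  simp only [quadForm, Matrix.add_apply, ← Finset.sum_add_distrib]
  exact Finset.sum_congr rfl fun i _ => Finset.sum_congr rfl fun i' _ => by ring

lemma quadForm_sum {d : ℕ} {ι : Type*} (s : Finset ι) (P : ι → Matrix (Fin d) (Fin d) ℝ)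
    (z : Euc d) : quadForm (∑ j ∈ s, P j) z = ∑ j ∈ s, quadForm (P j) z := by
  classical
  induction s using Finset.induction with
  | empty => simp [quadForm]
  | insert a s h ih => rw [Finset.sum_insert h, quadForm_add, ih, Finset.sum_insert h]

-- derivative along a line
lemma hasDerivAt_line {d : ℕ} (f : Euc d → ℝ) (hdiff : Differentiable ℝ f) (c w : Euc d) (t : ℝ) :
    HasDerivAt (fun s : ℝ => f (c + s • w)) ⟪gradient f (c + t • w), w⟫ t := by
  have hf : HasFDerivAt f ((InnerProductSpace.toDual ℝ (Euc d)) (gradient f (c + t • w)))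
      (c + t • w) := (hdiff _).hasGradientAt.hasFDerivAt
  have hline : HasDerivAt (fun s : ℝ => c + s • w) w t := by
    simpa using ((hasDerivAt_id t).smul_const w).const_add c
  have := hf.comp_hasDerivAt t hline
  exact this

-- convexity gradient inequality
lemma convex_grad_ineq {d : ℕ} (f : Euc d → ℝ) (hconv : ConvexOn ℝ Set.univ f)
    (hdiff : Differentiable ℝ f) (x z : Euc d) :
    f x + ⟪gradient f x, z - x⟫ ≤ f z := by
  set φ : ℝ → ℝ := fun t => f (x + t • (z - x)) with hφ
  have hφconv : ConvexOn ℝ Set.univ φ := by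
    have := hconv.comp_affineMap (AffineMap.lineMap x z : ℝ →ᵃ[ℝ] Euc d)
    have he : ∀ t : ℝ, (AffineMap.lineMap x z : ℝ →ᵃ[ℝ] Euc d) t = x + t • (z - x) := by
      intro t; simp [AffineMap.lineMap_apply_module]; module
    have hfun : (f ∘ ⇑(AffineMap.lineMap x z)) = φ := funext fun t => by
      rw [Function.comp_apply, he]
    rwa [Set.preimage_univ, hfun] at this
  have hder : HasDerivAt φ ⟪gradient f (x + (0:ℝ) • (z - x)), z - x⟫ 0 :=
    hasDerivAt_line f hdiff x (z - x) 0
  have hslope := hφconv.le_slope_of_hasDerivAt (Set.mem_univ (0:ℝ)) (Set.mem_univ (1:ℝ))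
    one_pos hder
  have h0 : φ 0 = f x := by simp [hφ]
  have h1 : φ 1 = f z := by simp [hφ]
  have hg : (x + (0:ℝ) • (z - x)) = x := by simp
  rw [hg] at hslope
  rw [slope_def_field] at hslope
  simp only [h0, h1] at hslope
  have : ⟪gradient f x, z - x⟫ ≤ f z - f x := by
    simpa using hslope
  linarith

lemma grad_sq_lip {d m : ℕ} (blk : Fin d → Fin m) (f : Euc d → ℝ)
    (Q : Fin m → Matrix (Fin d) (Fin d) ℝ) (hlip : BlockLip blk f Q) (x y : Euc d) :
    ‖gradient f x - gradient f y‖^2 ≤ (∑ j : Fin m, specNorm (Q j)) * ‖x - y‖^2 := by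
  rw [← sum_nmask_normsq blk (gradient f x - gradient f y)]
  have step : ∀ j ∈ Finset.range m, ‖nmask blk j (gradient f x - gradient f y)‖^2 ≤
      (fun j : ℕ => if h : j < m then quadForm (Q ⟨j, h⟩) (x - y) else 0) j := by
    intro j hj
    have hjm : j < m := Finset.mem_range.mp hj
    simp only [dif_pos hjm]
    rw [nmask_sub, nmask_eq_blockMask blk j hjm, nmask_eq_blockMask blk j hjm]
    exact hlip ⟨j, hjm⟩ x y
  calc ∑ j ∈ Finset.range m, ‖nmask blk j (gradient f x - gradient f y)‖^2
      ≤ ∑ j ∈ Finset.range m, (fun j : ℕ =>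
          if h : j < m then quadForm (Q ⟨j, h⟩) (x - y) else 0) j := Finset.sum_le_sum step
    _ = ∑ j : Fin m, quadForm (Q j) (x - y) := by
        rw [← Fin.sum_univ_eq_sum_range
          (fun j : ℕ => if h : j < m then quadForm (Q ⟨j, h⟩) (x - y) else 0) m]
        exact Finset.sum_congr rfl fun j _ => by simp
    _ ≤ ∑ j : Fin m, specNorm (Q j) * ‖x - y‖^2 :=
        Finset.sum_le_sum fun j _ => quadForm_le_specNorm (Q j) (x - y)
    _ = (∑ j : Fin m, specNorm (Q j)) * ‖x - y‖^2 := by rw [Finset.sum_mul]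

lemma grad_cont {d m : ℕ} (blk : Fin d → Fin m) (f : Euc d → ℝ)
    (Q : Fin m → Matrix (Fin d) (Fin d) ℝ) (hlip : BlockLip blk f Q) :
    Continuous (gradient f) := by
  set C := ∑ j : Fin m, specNorm (Q j) with hC
  have hC0 : 0 ≤ C := Finset.sum_nonneg fun j _ => norm_nonneg _
  have key : ∀ x y : Euc d, dist (gradient f x) (gradient f y) ≤ Real.sqrt C * dist x y := by
    intro x y
    rw [dist_eq_norm, dist_eq_norm]
    have h1 := grad_sq_lip blk f Q hlip x y
    have h2 : ‖gradient f x - gradient f y‖ = Real.sqrt (‖gradient f x - gradient f y‖^2) :=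
      (Real.sqrt_sq (norm_nonneg _)).symm
    rw [h2]
    calc Real.sqrt (‖gradient f x - gradient f y‖^2) ≤ Real.sqrt (C * ‖x - y‖^2) :=
          Real.sqrt_le_sqrt h1
      _ = Real.sqrt C * ‖x - y‖ := by
          rw [Real.sqrt_mul hC0, Real.sqrt_sq (norm_nonneg _)]
  exact (LipschitzWith.of_dist_le_mul (K := (Real.sqrt C).toNNReal) (fun x y => by
    rw [Real.coe_toNNReal _ (Real.sqrt_nonneg C)]
    exact key x y)).continuous

lemma eucMulVec_comb {d : ℕ} (A : Matrix (Fin d) (Fin d) ℝ) (c c' : ℝ) (x y : Euc d) :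
    eucMulVec A (c • x + c' • y) = c • eucMulVec A x + c' • eucMulVec A y := by
  ext i
  simp only [eucMulVec, EuclideanSpace.equiv, PiLp.continuousLinearEquiv_symm_apply,
    WithLp.equiv_symm_apply, PiLp.toLp_apply, PiLp.add_apply, PiLp.smul_apply, smul_eq_mul,
    Matrix.mulVec, dotProduct, Finset.mul_sum, ← Finset.sum_add_distrib]
  refine Finset.sum_congr rfl fun k _ => by ring

lemma step_bound {d m : ℕ} (blk : Fin d → Fin m) (f : Euc d → ℝ) (hdiff : Differentiable ℝ f)
    (Q : Fin m → Matrix (Fin d) (Fin d) ℝ) (hpsd : ∀ j, (Q j).PosSemidef)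
    (hlip : BlockLip blk f Q) (a b : Euc d) (j : ℕ) (hj : j < m) :
    ⟪gradient f a, nmask blk j (a-b)⟫ -
      ((Real.sqrt (quadForm (Q ⟨j,hj⟩) (mge blk j (a-b))) +
        Real.sqrt (quadForm (Q ⟨j,hj⟩) (mge blk (j+1) (a-b))))/2) * ‖nmask blk j (a-b)‖
      ≤ f (blockCombine blk (j+1) a b) - f (blockCombine blk j a b) := by
  obtain ⟨A, hA⟩ := (by open scoped MatrixOrder in simpa [Matrix.star_eq_conjTranspose] using CStarAlgebra.nonneg_iff_eq_star_mul_self.mp (hpsd ⟨j, hj⟩).nonneg : ∃ B : Matrix (Fin d) (Fin d) ℝ, Q ⟨j, hj⟩ = Bᴴ * B)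
  have hAt : Q ⟨j, hj⟩ = Aᵀ * A := by
    rw [hA, Matrix.conjTranspose_eq_transpose_of_trivial]
  set v : Euc d := a - b with hv
  set w : Euc d := nmask blk j v with hw
  set u : Euc d := blockCombine blk j a b with hu
  set α : ℝ := Real.sqrt (quadForm (Q ⟨j,hj⟩) (mge blk j v)) with hα
  set β : ℝ := Real.sqrt (quadForm (Q ⟨j,hj⟩) (mge blk (j+1) v)) with hβ
  have hαe : α = ‖eucMulVec A (mge blk j v)‖ := by
    rw [hα, hAt, quadForm_transpose_mul_self, Real.sqrt_sq (norm_nonneg _)]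
  have hβe : β = ‖eucMulVec A (mge blk (j+1) v)‖ := by
    rw [hβ, hAt, quadForm_transpose_mul_self, Real.sqrt_sq (norm_nonneg _)]
  -- pointwise bound on the mask of gradient difference
  have hmask : ∀ t : ℝ, t ∈ Icc (0:ℝ) 1 →
      ‖blockMask blk ⟨j,hj⟩ (gradient f a) - blockMask blk ⟨j,hj⟩ (gradient f (u + t • w))‖ ≤
        (1-t) * α + t * β := by
    intro t ht
    have h2 := hlip ⟨j, hj⟩ a (u + t • w)
    have h3 : a - (u + t • w) = (1-t) • mge blk j v + t • mge blk (j+1) v :=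
      combine_step_eq blk j a b t
    rw [h3, hAt, quadForm_transpose_mul_self, eucMulVec_comb] at h2
    have h4 : ‖(1-t) • eucMulVec A (mge blk j v) + t • eucMulVec A (mge blk (j+1) v)‖ ≤
        (1-t) * α + t * β := by
      calc ‖(1-t) • eucMulVec A (mge blk j v) + t • eucMulVec A (mge blk (j+1) v)‖
          ≤ ‖(1-t) • eucMulVec A (mge blk j v)‖ + ‖t • eucMulVec A (mge blk (j+1) v)‖ :=
            norm_add_le _ _
        _ = (1-t) * α + t * β := by
            rw [norm_smul, norm_smul, hαe, hβe, Real.norm_eq_abs, Real.norm_eq_abs,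
              abs_of_nonneg (by linarith [ht.2] : (0:ℝ) ≤ 1 - t), abs_of_nonneg ht.1]
    have h5 : ‖blockMask blk ⟨j,hj⟩ (gradient f a) -
        blockMask blk ⟨j,hj⟩ (gradient f (u + t • w))‖^2 ≤ ((1-t) * α + t * β)^2 := by
      calc ‖blockMask blk ⟨j,hj⟩ (gradient f a) -
          blockMask blk ⟨j,hj⟩ (gradient f (u + t • w))‖^2
          ≤ ‖(1-t) • eucMulVec A (mge blk j v) + t • eucMulVec A (mge blk (j+1) v)‖^2 := h2
        _ ≤ ((1-t) * α + t * β)^2 := by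
            have h6 : (0:ℝ) ≤ ‖(1-t) • eucMulVec A (mge blk j v) +
              t • eucMulVec A (mge blk (j+1) v)‖ := norm_nonneg _
            nlinarith
    calc ‖blockMask blk ⟨j,hj⟩ (gradient f a) - blockMask blk ⟨j,hj⟩ (gradient f (u + t • w))‖
        = Real.sqrt (‖blockMask blk ⟨j,hj⟩ (gradient f a) -
            blockMask blk ⟨j,hj⟩ (gradient f (u + t • w))‖^2) :=
          (Real.sqrt_sq (norm_nonneg _)).symm
      _ ≤ Real.sqrt (((1-t) * α + t * β)^2) := Real.sqrt_le_sqrt h5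
      _ = (1-t) * α + t * β := by
          rw [Real.sqrt_sq]
          have hα0 : 0 ≤ α := Real.sqrt_nonneg _
          have hβ0 : 0 ≤ β := Real.sqrt_nonneg _
          nlinarith [ht.1, ht.2]
  -- pointwise bound on the derivative
  have hinner : ∀ t : ℝ, t ∈ Icc (0:ℝ) 1 →
      ⟪gradient f a, w⟫ - ((1-t) * α + t * β) * ‖w‖ ≤ ⟪gradient f (u + t • w), w⟫ := by
    intro t ht
    have h1 : ⟪gradient f a, w⟫ - ⟪gradient f (u + t • w), w⟫ =
        ⟪gradient f a - gradient f (u + t • w), w⟫ := (inner_sub_left _ _ _).symm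
    have h2 : ⟪gradient f a - gradient f (u + t • w), w⟫ =
        ⟪nmask blk j (gradient f a - gradient f (u + t • w)), w⟫ := by
      rw [hw, inner_nmask]
    have h3 : ⟪nmask blk j (gradient f a - gradient f (u + t • w)), w⟫ ≤
        ((1-t) * α + t * β) * ‖w‖ := by
      calc ⟪nmask blk j (gradient f a - gradient f (u + t • w)), w⟫
          ≤ ‖nmask blk j (gradient f a - gradient f (u + t • w))‖ * ‖w‖ := real_inner_le_norm _ _
        _ ≤ ((1-t) * α + t * β) * ‖w‖ := by
            refine mul_le_mul_of_nonneg_right ?_ (norm_nonneg _)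
            rw [nmask_sub, nmask_eq_blockMask blk j hj, nmask_eq_blockMask blk j hj]
            exact hmask t ht
    linarith [h1 ▸ h2 ▸ h3]
  -- FTC and integral comparison
  have hgc : Continuous (gradient f) := grad_cont blk f Q hlip
  have hline : Continuous fun t : ℝ => u + t • w :=
    continuous_const.add (continuous_id.smul continuous_const)
  have hcont : Continuous fun t : ℝ => ⟪gradient f (u + t • w), w⟫ :=
    Continuous.inner (hgc.comp hline) continuous_const
  have hFTC : ∫ t in (0:ℝ)..1, ⟪gradient f (u + t • w), w⟫ =
      f (u + (1:ℝ) • w) - f (u + (0:ℝ) • w) :=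
    intervalIntegral.integral_eq_sub_of_hasDerivAt
      (fun t _ => hasDerivAt_line f hdiff u w t) (hcont.intervalIntegrable 0 1)
  set c0 : ℝ := ⟪gradient f a, w⟫ with hc0
  have hG : ∀ t : ℝ, HasDerivAt (fun s : ℝ => c0 * s - ((s - s^2/2) * α + (s^2/2) * β) * ‖w‖)
      (c0 - ((1-t) * α + t * β) * ‖w‖) t := by
    intro t
    have hsq : HasDerivAt (fun s : ℝ => s^2) (2*t) t := by simpa using hasDerivAt_pow 2 t
    have h1 : HasDerivAt (fun s : ℝ => s - s^2/2) (1 - t) t := by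
      have := (hasDerivAt_id t).sub (hsq.div_const 2)
      exact this.congr_deriv (by ring)
    have h2 : HasDerivAt (fun s : ℝ => s^2/2) t t := by
      have := hsq.div_const 2
      exact this.congr_deriv (by ring)
    have h3 := ((h1.mul_const α).add (h2.mul_const β)).mul_const ‖w‖
    have h4 := (hasDerivAt_id t).const_mul c0
    have h5 := h4.sub h3
    exact h5.congr_deriv (by ring)
  have hlowcont : Continuous fun t : ℝ => c0 - ((1-t) * α + t * β) * ‖w‖ :=
    continuous_const.sub ((((continuous_const.sub continuous_id).mul continuous_const).add
      (continuous_id.mul continuous_const)).mul continuous_const)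
  have hIntLower : ∫ t in (0:ℝ)..1, (c0 - ((1-t) * α + t * β) * ‖w‖) =
      c0 - ((α + β)/2) * ‖w‖ := by
    rw [intervalIntegral.integral_eq_sub_of_hasDerivAt (fun t _ => hG t)
      (hlowcont.intervalIntegrable 0 1)]
    ring
  have hmono : ∫ t in (0:ℝ)..1, (c0 - ((1-t) * α + t * β) * ‖w‖) ≤
      ∫ t in (0:ℝ)..1, ⟪gradient f (u + t • w), w⟫ :=
    intervalIntegral.integral_mono_on (by norm_num) (hlowcont.intervalIntegrable 0 1)
      (hcont.intervalIntegrable 0 1) (fun t ht => hinner t ht)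
  have e1 : u + (1:ℝ) • w = blockCombine blk (j+1) a b := by
    rw [one_smul, hu, hw, hv]
    exact blockCombine_succ blk j a b
  have e0 : u + (0:ℝ) • w = u := by rw [zero_smul, add_zero]
  rw [hIntLower, hFTC, e1, e0] at hmono
  rw [hu] at hmono
  linarith

lemma quadForm_nonneg {d : ℕ} {Q : Matrix (Fin d) (Fin d) ℝ} (h : Q.PosSemidef) (z : Euc d) :
    0 ≤ quadForm Q z := by
  obtain ⟨A, hA⟩ := (by open scoped MatrixOrder in simpa [Matrix.star_eq_conjTranspose] using CStarAlgebra.nonneg_iff_eq_star_mul_self.mp h.nonneg : ∃ B : Matrix (Fin d) (Fin d) ℝ, Q = Bᴴ * B)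
  rw [hA, Matrix.conjTranspose_eq_transpose_of_trivial, quadForm_transpose_mul_self]
  positivity

lemma descent_lemma {d m : ℕ} (blk : Fin d → Fin m) (f : Euc d → ℝ) (hdiff : Differentiable ℝ f)
    (Q : Fin m → Matrix (Fin d) (Fin d) ℝ) (hpsd : ∀ j, (Q j).PosSemidef)
    (hlip : BlockLip blk f Q) (a b : Euc d) :
    f b ≤ f a + ⟪gradient f a, b - a⟫ + (bigL blk Q / 2) * ‖a - b‖^2 := by
  set v : Euc d := a - b with hv
  set s : ℝ := specNorm (Qtilde blk Q) with hs
  have hs0 : 0 ≤ s := norm_nonneg _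
  set αf : ℕ → ℝ := fun j =>
    if h : j < m then Real.sqrt (quadForm (Q ⟨j,h⟩) (mge blk j v)) else 0 with hαf
  set βf : ℕ → ℝ := fun j =>
    if h : j < m then Real.sqrt (quadForm (Q ⟨j,h⟩) (mge blk (j+1) v)) else 0 with hβf
  have hαf0 : ∀ j, 0 ≤ αf j := by
    intro j; rw [hαf]; dsimp only; split; exacts [Real.sqrt_nonneg _, le_rfl]
  have hβf0 : ∀ j, 0 ≤ βf j := by
    intro j; rw [hβf]; dsimp only; split; exacts [Real.sqrt_nonneg _, le_rfl]
  -- telescoping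
  have tele : ∑ j ∈ Finset.range m,
      (f (blockCombine blk (j+1) a b) - f (blockCombine blk j a b)) = f a - f b := by
    rw [Finset.sum_range_sub (fun j => f (blockCombine blk j a b))]
    rw [blockCombine_top, blockCombine_zero]
  have hstep : ∀ j ∈ Finset.range m,
      ⟪gradient f a, nmask blk j v⟫ - ((αf j + βf j)/2) * ‖nmask blk j v‖ ≤
        f (blockCombine blk (j+1) a b) - f (blockCombine blk j a b) := by
    intro j hj
    have hjm := Finset.mem_range.mp hj
    have := step_bound blk f hdiff Q hpsd hlip a b j hjm
    rw [hαf, hβf]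
    dsimp only
    rw [dif_pos hjm, dif_pos hjm]
    exact this
  have hsum : ⟪gradient f a, v⟫ -
      ∑ j ∈ Finset.range m, ((αf j + βf j)/2) * ‖nmask blk j v‖ ≤ f a - f b := by
    rw [← tele, ← sum_inner_nmask blk (gradient f a) v, ← Finset.sum_sub_distrib]
    exact Finset.sum_le_sum hstep
  set S : ℝ := ∑ j ∈ Finset.range m, ((αf j + βf j)/2) * ‖nmask blk j v‖ with hS
  -- Cauchy-Schwarz
  have hCS : S^2 ≤ (∑ j ∈ Finset.range m, ((αf j + βf j)/2)^2) *
      (∑ j ∈ Finset.range m, ‖nmask blk j v‖^2) :=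
    Finset.sum_mul_sq_le_sq_mul_sq _ _ _
  rw [sum_nmask_normsq] at hCS
  -- bound sum of squares by quadForm of Qtilde
  have hQt : ∑ j ∈ Finset.range m, (αf j^2 + βf j^2) = quadForm (Qtilde blk Q) v := by
    rw [Qtilde, quadForm_sum, ← Fin.sum_univ_eq_sum_range (fun j : ℕ => αf j^2 + βf j^2) m]
    refine Finset.sum_congr rfl fun j _ => ?_
    rw [quadForm_add, keepGE_quadForm, show (j:ℕ)+2 = ((j:ℕ)+1)+1 from rfl, keepGE_quadForm]
    rw [hαf, hβf]
    dsimp only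
    rw [dif_pos j.is_lt, dif_pos j.is_lt, Real.sq_sqrt (quadForm_nonneg (hpsd _) _),
      Real.sq_sqrt (quadForm_nonneg (hpsd _) _)]
  have hsq : ∑ j ∈ Finset.range m, ((αf j + βf j)/2)^2 ≤ (1/2) * quadForm (Qtilde blk Q) v := by
    rw [← hQt, Finset.mul_sum]
    refine Finset.sum_le_sum fun j _ => ?_
    nlinarith [hαf0 j, hβf0 j, sq_nonneg (αf j - βf j)]
  have hquad : quadForm (Qtilde blk Q) v ≤ s * ‖v‖^2 := quadForm_le_specNorm _ _
  have hS0 : 0 ≤ S := Finset.sum_nonneg fun j _ =>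
    mul_nonneg (by linarith [hαf0 j, hβf0 j]) (norm_nonneg _)
  have hS2 : S^2 ≤ (s/2) * ‖v‖^2 * ‖v‖^2 := by nlinarith [norm_nonneg v, sq_nonneg ‖v‖]
  have hL2 : (bigL blk Q / 2) * ‖v‖^2 = Real.sqrt ((s/2) * ‖v‖^2 * ‖v‖^2) := by
    have h1 : Real.sqrt ((s/2) * ‖v‖^2 * ‖v‖^2) = Real.sqrt (2*s) * (‖v‖^2/2) := by
      rw [show (s/2) * ‖v‖^2 * ‖v‖^2 = (2*s) * (‖v‖^2/2)^2 by ring,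
        Real.sqrt_mul (by linarith) _, Real.sqrt_sq (by positivity)]
    rw [bigL, ← hs, h1]
    ring
  have hSle : S ≤ (bigL blk Q / 2) * ‖v‖^2 := by
    rw [hL2, ← Real.sqrt_sq hS0]
    exact Real.sqrt_le_sqrt hS2
  have hinner2 : ⟪gradient f a, b - a⟫ = -⟪gradient f a, v⟫ := by
    rw [hv, show b - a = -(a - b) from by abel, inner_neg_right]
  linarith


theorem stmt1 {d m : ℕ} (blk : Fin d → Fin m) (hmono : Monotone blk)
    (hsurj : Function.Surjective blk)
    (f : Euc d → ℝ) (hconv : ConvexOn ℝ Set.univ f) (hdiff : Differentiable ℝ f)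
    (Q : Fin m → Matrix (Fin d) (Fin d) ℝ) (hpsd : ∀ j, (Q j).PosSemidef)
    (hlip : BlockLip blk f Q) :
    ∀ x y : Euc d,
      ‖gradient f y - gradient f x‖ ^ 2 ≤
        2 * bigL blk Q * (f y - f x - ⟪gradient f x, y - x⟫) := by
  intro x y
  set g : Euc d := gradient f y - gradient f x with hg
  set L : ℝ := bigL blk Q with hL
  set D : ℝ := f y - f x - ⟪gradient f x, y - x⟫ with hD
  have hL0 : 0 ≤ L := Real.sqrt_nonneg _
  have key : ∀ u : Euc d, ⟪g, u⟫ - (L/2) * ‖u‖^2 ≤ D := by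
    intro u
    have h1 := convex_grad_ineq f hconv hdiff x (y - u)
    have h2 := descent_lemma blk f hdiff Q hpsd hlip y (y - u)
    have e1 : (y - u) - x = (y - x) - u := by abel
    have e2 : (y - u) - y = -u := by abel
    have e3 : y - (y - u) = u := by abel
    rw [e1, inner_sub_right] at h1
    rw [e2, inner_neg_right, e3] at h2
    have e4 : ⟪g, u⟫ = ⟪gradient f y, u⟫ - ⟪gradient f x, u⟫ := by
      rw [hg, inner_sub_left]
    rw [hD, e4]
    linarith
  rcases eq_or_lt_of_le hL0 with hLeq | hLpos
  · have h1 : ∀ t : ℝ, t * ‖g‖^2 ≤ D := by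
      intro t
      have := key (t • g)
      rw [real_inner_smul_right, real_inner_self_eq_norm_sq, ← hLeq] at this
      simpa using this
    have h2 : ‖g‖^2 ≤ 0 := by
      by_contra hc
      push_neg at hc
      have h3 := h1 ((D+1)/‖g‖^2)
      rw [div_mul_cancel₀ _ (ne_of_gt hc)] at h3
      linarith
    rw [← hLeq]
    ring_nf
    linarith
  · have h1 := key ((1/L) • g)
    rw [real_inner_smul_right, real_inner_self_eq_norm_sq, norm_smul, Real.norm_eq_abs,
      abs_of_pos (by positivity : (0:ℝ) < 1/L), mul_pow] at h1
    have e : 1/L*‖g‖^2 - L/2*((1/L)^2*‖g‖^2) = ‖g‖^2/(2*L) := by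
      field_simp
      ring
    rw [e, div_le_iff₀ (by linarith : (0:ℝ) < 2*L)] at h1
    calc ‖g‖^2 ≤ D * (2*L) := h1
      _ = 2 * L * D := by ring
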